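/- Let k ≥ 1 be an integer, let (T, r) be a rooted tree, and let (T_q : q ∈ Q) be a finite family of limbs in (T, r). Define a graph J on vertex set Q by making distinct q_1, q_2 adjacent if there are at least k vertices x of T such that x lies in the interior of both T_{q_1} and T_{q_2} and x lies in no T_q for q ∈ Q \ {q_1, q_2}. Then J is a forest. -/

import Mathlib

set_option linter.unusedSectionVars false


/-- `u` is a child of `v` in the tree `G` rooted at `r`. -/
def IsChild {V : Type} (G : SimpleGraph V) (r v u : V) : Prop :=
  G.Adj v u ∧ G.dist r u = G.dist r v + 1

/-- `v` is a leaf of the rooted tree `(G, r)`. -/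
def IsRootedLeaf {V : Type} (G : SimpleGraph V) (r v : V) : Prop :=
  ∀ u, ¬ IsChild G r v u

/-- `v` is an ancestor of `u` in the tree `G` rooted at `r`: `v` lies on the path of the
tree from `u` to `r`. -/
def IsAncestor {V : Type} (G : SimpleGraph V) (r u v : V) : Prop :=
  G.dist u v + G.dist v r = G.dist u r

/-- `x` lies on the (unique) path of the tree `G` between `a` and `b`. -/
def OnTreePath {V : Type} (G : SimpleGraph V) (a b x : V) : Prop :=
  G.dist a x + G.dist x b = G.dist a b

/-- The pair `(leaf, start)` determines a limb of the rooted tree `(G, r)`: a path of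
positive length from a leaf `≠ r` to one of its ancestors. -/
def IsLimb {V : Type} (G : SimpleGraph V) (r leaf start : V) : Prop :=
  IsRootedLeaf G r leaf ∧ leaf ≠ r ∧ IsAncestor G r leaf start ∧ start ≠ leaf

/-- `x` lies in the interior of the limb from `leaf` to `start`. -/
def InLimbInterior {V : Type} (G : SimpleGraph V) (leaf start x : V) : Prop :=
  OnTreePath G leaf start x ∧ x ≠ leaf ∧ x ≠ start

/-- The adjacency relation of the `k`-overlap graph of a family of limbs. -/
def OverlapRel {V Q : Type} (G : SimpleGraph V) (leaf start : Q → V) (k : ℕ)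
    (q₁ q₂ : Q) : Prop :=
  k ≤ {x | InLimbInterior G (leaf q₁) (start q₁) x ∧
          InLimbInterior G (leaf q₂) (start q₂) x ∧
          ∀ q, q ≠ q₁ → q ≠ q₂ → ¬ OnTreePath G (leaf q) (start q) x}.ncard

open SimpleGraph Walk

variable {V : Type} [DecidableEq V] {G : SimpleGraph V}

private lemma dist_take_drop (hc : G.Connected) {a b x : V} {p : G.Walk a b}
    (hlen : p.length = G.dist a b) (hx : x ∈ p.support) :
    G.dist a x = (p.takeUntil x hx).length ∧ G.dist x b = (p.dropUntil x hx).length := by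
  have h1 : (p.takeUntil x hx).length + (p.dropUntil x hx).length = p.length := by
    rw [← Walk.length_append, Walk.take_spec]
  have h2 := SimpleGraph.dist_le (p.takeUntil x hx)
  have h3 := SimpleGraph.dist_le (p.dropUntil x hx)
  have h4 := hc.dist_triangle (u := a) (v := x) (w := b)
  omega

private lemma onTreePath_of_mem (hc : G.Connected) {a b x : V} {p : G.Walk a b}
    (hlen : p.length = G.dist a b) (hx : x ∈ p.support) : OnTreePath G a b x := by
  obtain ⟨h1, h2⟩ := dist_take_drop hc hlen hx
  have h3 : (p.takeUntil x hx).length + (p.dropUntil x hx).length = p.length := by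
    rw [← Walk.length_append, Walk.take_spec]
  show G.dist a x + G.dist x b = G.dist a b
  omega

private lemma tree_path_length (hc : G.Connected) (ha : G.IsAcyclic) {a b : V}
    {p : G.Walk a b} (hp : p.IsPath) : p.length = G.dist a b := by
  obtain ⟨p₀, hp₀, hl₀⟩ := hc.exists_path_of_dist a b
  have h : (⟨p, hp⟩ : G.Path a b) = ⟨p₀, hp₀⟩ := ha.path_unique _ _
  have := congrArg (fun q : G.Path a b => q.1.length) h
  simpa [hl₀] using this

private lemma mem_support_of_onTreePath (hc : G.Connected) (ha : G.IsAcyclic) {a b x : V}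
    (h : OnTreePath G a b x) {p : G.Walk a b} (hp : p.IsPath) : x ∈ p.support := by
  obtain ⟨p₁, hp₁, hl₁⟩ := hc.exists_path_of_dist a x
  obtain ⟨p₂, hp₂, hl₂⟩ := hc.exists_path_of_dist x b
  have hdisj : List.Disjoint p₁.support p₂.support.tail := by
    intro v hv1 hv2
    have hv2' : v ∈ p₂.support := List.mem_of_mem_tail hv2
    have e1 : G.dist a v + G.dist v x = G.dist a x := onTreePath_of_mem hc hl₁ hv1
    have e2 : G.dist x v + G.dist v b = G.dist x b := onTreePath_of_mem hc hl₂ hv2'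
    have t1 := hc.dist_triangle (u := a) (v := v) (w := b)
    have hcm : G.dist v x = G.dist x v := SimpleGraph.dist_comm
    have h' : G.dist a x + G.dist x b = G.dist a b := h
    have hvx : G.dist x v = 0 := by omega
    have : v = x := ((hc.dist_eq_zero_iff).mp (hcm ▸ hvx : G.dist v x = 0))
    subst this
    have hnd : p₂.support.Nodup := hp₂.support_nodup
    rw [p₂.support_eq_cons] at hnd
    exact (List.nodup_cons.mp hnd).1 hv2
  have hw : (p₁.append p₂).IsPath := by
    rw [Walk.isPath_def, Walk.support_append]
    exact (hp₁.support_nodup).append ((hp₂.support_nodup).tail) hdisj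
  have hmem : x ∈ (p₁.append p₂).support := by
    rw [Walk.mem_support_append_iff]
    exact Or.inl p₁.end_mem_support
  have heq : (⟨p₁.append p₂, hw⟩ : G.Path a b) = ⟨p, hp⟩ := ha.path_unique _ _
  have h2 := congrArg (fun q : G.Path a b => q.1.support) heq
  simp only at h2
  rw [← h2]
  exact hmem

private lemma between_of_le (hc : G.Connected) (ha : G.IsAcyclic) {a b x y : V}
    (hx : OnTreePath G a b x) (hy : OnTreePath G a b y) (hle : G.dist a x ≤ G.dist a y) :
    OnTreePath G a y x ∧ OnTreePath G x b y := by
  obtain ⟨p, hp, hl⟩ := hc.exists_path_of_dist a b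
  have hxs := mem_support_of_onTreePath hc ha hx hp
  have hys := mem_support_of_onTreePath hc ha hy hp
  have hty := dist_take_drop hc hl hys
  have hsplit : x ∈ (p.takeUntil y hys).support ∨ x ∈ (p.dropUntil y hys).support := by
    rw [← Walk.mem_support_append_iff, Walk.take_spec]
    exact hxs
  have hxn : G.dist a x + G.dist x b = G.dist a b := hx
  have hyn : G.dist a y + G.dist y b = G.dist a b := hy
  rcases hsplit with hmem | hmem
  · have e1 : G.dist a x + G.dist x y = G.dist a y :=
      onTreePath_of_mem hc hty.1.symm hmem
    refine ⟨e1, ?_⟩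
    have t1 := hc.dist_triangle (u := a) (v := x) (w := b)
    have t2 := hc.dist_triangle (u := x) (v := y) (w := b)
    show G.dist x y + G.dist y b = G.dist x b
    omega
  · have e2 : G.dist y x + G.dist x b = G.dist y b :=
      onTreePath_of_mem hc hty.2.symm hmem
    have hyx : G.dist y x = 0 := by omega
    have : x = y := ((hc.dist_eq_zero_iff).mp (SimpleGraph.dist_comm ▸ hyx : G.dist x y = 0))
    subst this
    constructor
    · show G.dist a x + G.dist x x = G.dist a x
      simp [SimpleGraph.dist_self]
    · show G.dist x x + G.dist x b = G.dist x b
      simp [SimpleGraph.dist_self]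

private lemma onTreePath_trans (hc : G.Connected) {a b c x : V}
    (h1 : OnTreePath G a c b) (h2 : OnTreePath G a b x) : OnTreePath G a c x := by
  have h1' : G.dist a b + G.dist b c = G.dist a c := h1
  have h2' : G.dist a x + G.dist x b = G.dist a b := h2
  have t1 := hc.dist_triangle (u := x) (v := b) (w := c)
  have t2 := hc.dist_triangle (u := a) (v := x) (w := c)
  show G.dist a x + G.dist x c = G.dist a c
  omega

private lemma onTreePath_trans' (hc : G.Connected) {a b x y : V}
    (h1 : OnTreePath G a b x) (h2 : OnTreePath G x b y) : OnTreePath G a b y := by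
  have h1' : G.dist a x + G.dist x b = G.dist a b := h1
  have h2' : G.dist x y + G.dist y b = G.dist x b := h2
  have t1 := hc.dist_triangle (u := a) (v := x) (w := y)
  have t2 := hc.dist_triangle (u := a) (v := y) (w := b)
  show G.dist a y + G.dist y b = G.dist a b
  omega

private lemma key (hc : G.Connected) (ha : G.IsAcyclic) {r l₁ s₁ l₂ s₂ x y : V}
    (h1 : OnTreePath G l₁ r s₁) (h2 : OnTreePath G l₂ r s₂)
    (hx1 : OnTreePath G l₁ s₁ x) (hx2 : OnTreePath G l₂ s₂ x)
    (hy1 : OnTreePath G l₁ s₁ y) (hys : y ≠ s₁)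
    (hdep : G.dist y r ≤ G.dist x r)
    (hav : ¬ OnTreePath G l₂ s₂ y) :
    G.dist s₁ r < G.dist s₂ r := by
  have hx1' : OnTreePath G l₁ r x := onTreePath_trans hc h1 hx1
  have hy1' : OnTreePath G l₁ r y := onTreePath_trans hc h1 hy1
  have hle1 : G.dist l₁ x ≤ G.dist l₁ y := by
    have e1 : G.dist l₁ x + G.dist x r = G.dist l₁ r := hx1'
    have e2 : G.dist l₁ y + G.dist y r = G.dist l₁ r := hy1'
    omega
  have hxy : OnTreePath G x r y := (between_of_le hc ha hx1' hy1' hle1).2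
  have hx2' : OnTreePath G l₂ r x := onTreePath_trans hc h2 hx2
  have hle2 : G.dist l₂ x ≤ G.dist l₂ s₂ := by
    have e1 : G.dist l₂ x + G.dist x s₂ = G.dist l₂ s₂ := hx2
    omega
  have hxs2 : OnTreePath G x r s₂ := (between_of_le hc ha hx2' h2 hle2).2
  have hgt : G.dist x s₂ < G.dist x y := by
    by_contra hcon
    push_neg at hcon
    have h5 : OnTreePath G x s₂ y := (between_of_le hc ha hxy hxs2 hcon).1
    exact hav (onTreePath_trans' hc hx2 h5)
  have e1 : G.dist x y + G.dist y r = G.dist x r := hxy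
  have e2 : G.dist x s₂ + G.dist s₂ r = G.dist x r := hxs2
  have hle3 : G.dist l₁ y ≤ G.dist l₁ s₁ := by
    have e3 : G.dist l₁ y + G.dist y s₁ = G.dist l₁ s₁ := hy1
    omega
  have hys1 : OnTreePath G y r s₁ := (between_of_le hc ha hy1' h1 hle3).2
  have e4 : G.dist y s₁ + G.dist s₁ r = G.dist y r := hys1
  have hne : G.dist y s₁ ≠ 0 := fun h0 => hys ((hc.dist_eq_zero_iff).mp h0)
  omega

private lemma support_tail_ne_nil {a b : V} (p : G.Walk a b) (hp : ¬ p.Nil) :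
    p.support.tail ≠ [] := by
  have h1 := p.length_support
  have h2 : 0 < p.length := Walk.not_nil_iff_lt_length.mp hp
  intro h
  have := congrArg List.length h
  rw [List.length_tail, h1, List.length_nil] at this
  omega

private lemma exists_dart_snd {a b : V} (p : G.Walk a b) (hp : ¬ p.Nil) :
    ∃ d ∈ p.darts, d.snd = b := by
  have h1 : p.darts.map (·.snd) = p.support.tail := p.map_snd_darts
  have h2 := support_tail_ne_nil p hp
  have hb : b ∈ p.support.tail := by
    have h3 : p.support.tail.getLast h2 = b := by
      rw [List.getLast_tail, p.getLast_support]
    have := List.getLast_mem h2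
    rwa [h3] at this
  rw [← h1] at hb
  obtain ⟨d, hd, hd2⟩ := List.mem_map.mp hb
  exact ⟨d, hd, hd2⟩

private lemma exists_dart_fst {a b : V} (p : G.Walk a b) (hp : ¬ p.Nil) :
    ∃ d ∈ p.darts, d.fst = a := by
  have h1 : p.darts.map (·.fst) = p.support.dropLast := p.map_fst_darts
  have h2 := support_tail_ne_nil p hp
  have hb : a ∈ p.support.dropLast := by
    have heq : p.support.dropLast = a :: p.support.tail.dropLast := by
      conv_lhs => rw [p.support_eq_cons]
      rw [List.dropLast_cons_of_ne_nil h2]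
    rw [heq]
    exact List.mem_cons_self
  rw [← h1] at hb
  obtain ⟨d, hd, hd2⟩ := List.mem_map.mp hb
  exact ⟨d, hd, hd2⟩


/-- the `k`-overlap graph of a finite family of limbs of a rooted tree is a
forest. -/
theorem stmt_5 {V Q : Type} [Fintype Q] (G : SimpleGraph V) (hG : G.IsTree) (r : V)
    (k : ℕ) (hk : 1 ≤ k) (leaf start : Q → V)
    (hlimb : ∀ q, IsLimb G r (leaf q) (start q)) :
    (SimpleGraph.fromRel (OverlapRel G leaf start k)).IsAcyclic := by
  classical
  have hc : G.Connected := hG.isConnected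
  have ha : G.IsAcyclic := hG.IsAcyclic
  set J := SimpleGraph.fromRel (OverlapRel G leaf start k) with hJ
  intro v c hcyc
  have hwit : ∀ q₁ q₂, J.Adj q₁ q₂ → ∃ x : V,
      InLimbInterior G (leaf q₁) (start q₁) x ∧ InLimbInterior G (leaf q₂) (start q₂) x ∧
      ∀ q, q ≠ q₁ → q ≠ q₂ → ¬ OnTreePath G (leaf q) (start q) x := by
    intro q₁ q₂ hadj
    rw [hJ, SimpleGraph.fromRel_adj] at hadj
    obtain ⟨hne, h | h⟩ := hadj
    · have h' : 1 ≤ ({x | InLimbInterior G (leaf q₁) (start q₁) x ∧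
          InLimbInterior G (leaf q₂) (start q₂) x ∧
          ∀ q, q ≠ q₁ → q ≠ q₂ → ¬ OnTreePath G (leaf q) (start q) x}).ncard :=
        le_trans hk h
      obtain ⟨x, hx⟩ := Set.nonempty_of_ncard_ne_zero (Nat.one_le_iff_ne_zero.mp h')
      exact ⟨x, hx.1, hx.2.1, hx.2.2⟩
    · have h' : 1 ≤ ({x | InLimbInterior G (leaf q₂) (start q₂) x ∧
          InLimbInterior G (leaf q₁) (start q₁) x ∧
          ∀ q, q ≠ q₂ → q ≠ q₁ → ¬ OnTreePath G (leaf q) (start q) x}).ncard :=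
        le_trans hk h
      obtain ⟨x, hx⟩ := Set.nonempty_of_ncard_ne_zero (Nat.one_le_iff_ne_zero.mp h')
      exact ⟨x, hx.2.1, hx.1, fun q hq1 hq2 => hx.2.2 q hq2 hq1⟩
  choose W hW1 hW2 hW3 using hwit
  set f : J.Dart → ℕ := fun d => G.dist r (W d.fst d.snd d.adj) with hf
  have hdne : c.darts ≠ [] := by
    intro h
    have h1 := c.length_darts
    rw [h] at h1
    have h2 := SimpleGraph.Walk.not_nil_iff_lt_length.mp hcyc.not_nil
    simp at h1
    omega
  obtain ⟨m, hm⟩ : ∃ m, m ∈ c.darts.argmax f := by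
    cases h : c.darts.argmax f with
    | none => exact absurd (List.argmax_eq_none.mp h) hdne
    | some m => exact ⟨m, rfl⟩
  have hmmem : m ∈ c.darts := List.argmax_mem hm
  have hmax : ∀ d ∈ c.darts, f d ≤ f m := fun d hd => List.le_of_mem_argmax hd hm
  have hnodmap : (c.darts.map SimpleGraph.Dart.edge).Nodup := hcyc.edges_nodup
  have hedge_inj := List.inj_on_of_nodup_map hnodmap
  -- in-dart at m.fst
  have hq1s : m.fst ∈ c.support := SimpleGraph.Walk.dart_fst_mem_support_of_mem_darts c hmmem
  obtain ⟨din, hdin, hdin2⟩ := exists_dart_snd (c.rotate _ hq1s) (hcyc.rotate hq1s).not_nil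
  have hdinc : din ∈ c.darts := ((c.rotate_darts _ hq1s).mem_iff).mp hdin
  -- out-dart at m.snd
  have hq2s : m.snd ∈ c.support := SimpleGraph.Walk.dart_snd_mem_support_of_mem_darts c hmmem
  obtain ⟨dout, hdout, hdout2⟩ := exists_dart_fst (c.rotate _ hq2s) (hcyc.rotate hq2s).not_nil
  have hdoutc : dout ∈ c.darts := ((c.rotate_darts _ hq2s).mem_iff).mp hdout
  have hmne : m.fst ≠ m.snd := m.adj.ne
  have hq0 : din.fst ≠ m.snd := by
    intro hcon
    have hedge : din.edge = m.edge := by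
      have h1 : din.edge = s(m.fst, m.snd) :=
        SimpleGraph.dart_edge_eq_mk'_iff'.mpr (Or.inr ⟨hcon, hdin2⟩)
      have h2 : m.edge = s(m.fst, m.snd) :=
        SimpleGraph.dart_edge_eq_mk'_iff'.mpr (Or.inl ⟨rfl, rfl⟩)
      rw [h1, h2]
    have : din = m := hedge_inj hdinc hmmem hedge
    rw [this] at hdin2
    exact hmne hdin2.symm
  have hq3 : dout.snd ≠ m.fst := by
    intro hcon
    have hedge : dout.edge = m.edge := by
      have h1 : dout.edge = s(m.fst, m.snd) :=
        SimpleGraph.dart_edge_eq_mk'_iff'.mpr (Or.inr ⟨hdout2, hcon⟩)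
      have h2 : m.edge = s(m.fst, m.snd) :=
        SimpleGraph.dart_edge_eq_mk'_iff'.mpr (Or.inl ⟨rfl, rfl⟩)
      rw [h1, h2]
    have : dout = m := hedge_inj hdoutc hmmem hedge
    rw [this] at hdout2
    exact hmne hdout2
  -- the witnesses
  set x := W m.fst m.snd m.adj with hxdef
  set y := W din.fst din.snd din.adj with hydef
  set z := W dout.fst dout.snd dout.adj with hzdef
  have hxI1 : InLimbInterior G (leaf m.fst) (start m.fst) x := hW1 _ _ m.adj
  have hxI2 : InLimbInterior G (leaf m.snd) (start m.snd) x := hW2 _ _ m.adj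
  have hyI : InLimbInterior G (leaf m.fst) (start m.fst) y := by
    rw [← hdin2]
    exact hW2 _ _ din.adj
  have hyav : ¬ OnTreePath G (leaf m.snd) (start m.snd) y :=
    hW3 _ _ din.adj m.snd (Ne.symm hq0) (fun he => hmne ((he.trans hdin2).symm))
  have hzI : InLimbInterior G (leaf m.snd) (start m.snd) z := by
    rw [← hdout2]
    exact hW1 _ _ dout.adj
  have hzav : ¬ OnTreePath G (leaf m.fst) (start m.fst) z :=
    hW3 _ _ dout.adj m.fst (fun he => hmne (he.trans hdout2)) (Ne.symm hq3)
  have hymax : G.dist y r ≤ G.dist x r := by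
    rw [SimpleGraph.dist_comm (u := y), SimpleGraph.dist_comm (u := x)]
    exact hmax din hdinc
  have hzmax : G.dist z r ≤ G.dist x r := by
    rw [SimpleGraph.dist_comm (u := z), SimpleGraph.dist_comm (u := x)]
    exact hmax dout hdoutc
  have hanc : ∀ q, OnTreePath G (leaf q) r (start q) := fun q => (hlimb q).2.2.1
  have k1 : G.dist (start m.fst) r < G.dist (start m.snd) r :=
    key hc ha (hanc m.fst) (hanc m.snd) hxI1.1 hxI2.1 hyI.1 hyI.2.2 hymax hyav
  have k2 : G.dist (start m.snd) r < G.dist (start m.fst) r :=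
    key hc ha (hanc m.snd) (hanc m.fst) hxI2.1 hxI1.1 hzI.1 hzI.2.2 hzmax hzav
  omega
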